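/- Let X be a topological space of countable tightness. Then hl(X) ≤ sup{ w(K) : K is a compact convex subset of SC_p(X) }. -/

import Mathlib

open Set Filter Topology Cardinal

/-- A function is scatteredly continuous if every nonempty subset `A` of the domain
contains a point at which the restriction `f|A` is continuous. -/
def ScatCont {X Y : Type*} [TopologicalSpace X] [TopologicalSpace Y] (f : X → Y) : Prop :=
  ∀ A : Set X, A.Nonempty → ∃ a ∈ A, ContinuousWithinAt f A a

/-- A family of functions is scatteredly continuous if every nonempty subset `A` of the domain
contains a point at which all restrictions `f|A`, `f ∈ F`, are continuous. -/
def ScatContFam {X Y : Type*} [TopologicalSpace X] [TopologicalSpace Y]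
    (F : Set (X → Y)) : Prop :=
  ∀ A : Set X, A.Nonempty → ∃ a ∈ A, ∀ f ∈ F, ContinuousWithinAt f A a

/-- A function is weakly discontinuous if every subset `A` of the domain contains an
open (in `A`) dense (in `A`) subset `U` such that `f|U` is continuous. -/
def WeaklyDisc {X Y : Type*} [TopologicalSpace X] [TopologicalSpace Y] (f : X → Y) : Prop :=
  ∀ A : Set X, ∃ U : Set X, U ⊆ A ∧ (∃ V : Set X, IsOpen V ∧ U = V ∩ A) ∧
    A ⊆ closure U ∧ ContinuousOn f U

/-- A family of functions is weakly discontinuous if every subset `A` of the domain contains an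
open (in `A`) dense (in `A`) subset `U` such that every `f|U`, `f ∈ F`, is continuous. -/
def WeaklyDiscFam {X Y : Type*} [TopologicalSpace X] [TopologicalSpace Y]
    (F : Set (X → Y)) : Prop :=
  ∀ A : Set X, ∃ U : Set X, U ⊆ A ∧ (∃ V : Set X, IsOpen V ∧ U = V ∩ A) ∧
    A ⊆ closure U ∧ ∀ f ∈ F, ContinuousOn f U

/-- The decomposition number of a family `F` of functions: the smallest cardinality of a
cover `𝒞` of `X` such that every `f ∈ F` restricted to every `C ∈ 𝒞` is continuous. -/
noncomputable def Dec {X Y : Type*} [TopologicalSpace X] [TopologicalSpace Y]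
    (F : Set (X → Y)) : Cardinal :=
  sInf { c : Cardinal | ∃ 𝒞 : Set (Set X), c = #𝒞 ∧ ⋃₀ 𝒞 = Set.univ ∧
    ∀ C ∈ 𝒞, ∀ f ∈ F, ContinuousOn f C }

/-- The Lindelöf number: the smallest infinite cardinal `κ` such that every open cover
has a subcover of cardinality `≤ κ`. -/
noncomputable def lindelofNum (X : Type*) [TopologicalSpace X] : Cardinal :=
  sInf { κ : Cardinal | Cardinal.aleph0 ≤ κ ∧ ∀ 𝒰 : Set (Set X), (∀ U ∈ 𝒰, IsOpen U) →
    ⋃₀ 𝒰 = Set.univ → ∃ 𝒱 ⊆ 𝒰, #𝒱 ≤ κ ∧ ⋃₀ 𝒱 = Set.univ }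

/-- The hereditary Lindelöf number: the supremum of the Lindelöf numbers of all subspaces. -/
noncomputable def heredLindelofNum (X : Type*) [TopologicalSpace X] : Cardinal :=
  ⨆ Z : Set X, lindelofNum Z

/-- A network for a topological space: a family of (arbitrary) sets such that every open
neighbourhood of every point contains a member of the family containing that point. -/
def IsNetwork {X : Type*} [TopologicalSpace X] (N : Set (Set X)) : Prop :=
  ∀ (x : X) (U : Set X), IsOpen U → x ∈ U → ∃ n ∈ N, x ∈ n ∧ n ⊆ U

/-- The network weight: the smallest infinite cardinality of a network. -/
noncomputable def netWt (X : Type*) [TopologicalSpace X] : Cardinal :=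
  sInf { c : Cardinal | ∃ N : Set (Set X), IsNetwork N ∧ c = max #N Cardinal.aleph0 }

/-- The weight: the smallest infinite cardinality of a base of the topology. -/
noncomputable def wt (X : Type*) [TopologicalSpace X] : Cardinal :=
  sInf { c : Cardinal | ∃ B : Set (Set X), TopologicalSpace.IsTopologicalBasis B ∧
    c = max #B Cardinal.aleph0 }

/-- The density: the smallest cardinality of a dense subset. -/
noncomputable def dens (X : Type*) [TopologicalSpace X] : Cardinal :=
  sInf { c : Cardinal | ∃ D : Set X, Dense D ∧ c = #D }

/-- The hereditary density: the supremum of densities of all subspaces. -/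
noncomputable def heredDens (X : Type*) [TopologicalSpace X] : Cardinal :=
  ⨆ Z : Set X, dens Z

/-- The spread: the supremum of cardinalities of discrete subspaces. -/
noncomputable def spread (X : Type*) [TopologicalSpace X] : Cardinal :=
  sSup { c : Cardinal | ∃ D : Set X, DiscreteTopology D ∧ c = #D }

/-- A subset `C` of a topological vector space over `ℝ` is σ-convex if for every sequence
`(x n)` in `C` and every sequence `(t n)` of positive reals with `∑ n, t n = 1`, the series
`∑ n, t n • x n` converges to a point of `C`. -/
def SigmaConvex {L : Type*} [AddCommGroup L] [Module ℝ L] [TopologicalSpace L]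
    (C : Set L) : Prop :=
  ∀ (x : ℕ → L) (t : ℕ → ℝ), (∀ n, x n ∈ C) → (∀ n, 0 < t n) →
    Tendsto (fun N => ∑ n ∈ Finset.range N, t n) atTop (𝓝 1) →
    ∃ c ∈ C, Tendsto (fun N => ∑ n ∈ Finset.range N, t n • x n) atTop (𝓝 c)

/-- A topological space has countable tightness if every point in the closure of a set `A`
lies in the closure of a countable subset of `A`. -/
def CountablyTight (X : Type*) [TopologicalSpace X] : Prop :=
  ∀ (A : Set X) (a : X), a ∈ closure A → ∃ B ⊆ A, B.Countable ∧ a ∈ closure B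


section StmtFourAux

open Set Filter Topology Cardinal

/-- Functions into `[0,1]` constant on the classes of the equivalence induced by a chain. -/
private def chainSet {X : Type u} [TopologicalSpace X] (W : Ordinal.{v} → Set X) : Set (X → ℝ) :=
  {f | (∀ t, f t ∈ Icc (0:ℝ) 1) ∧ ∀ x y, (∀ o, x ∈ W o ↔ y ∈ W o) → f x = f y}

private theorem chainSet_isCompact {X : Type u} [TopologicalSpace X] (W : Ordinal.{v} → Set X) :
    IsCompact (chainSet W) := by
  apply IsCompact.of_isClosed_subset (isCompact_univ_pi (fun _ : X => isCompact_Icc (a := (0:ℝ)) (b := 1)))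
  · have : chainSet W = (⋂ t : X, (fun f : X → ℝ => f t) ⁻¹' Icc (0:ℝ) 1) ∩
        ⋂ (p : X × X) (_ : ∀ o, p.1 ∈ W o ↔ p.2 ∈ W o), {f : X → ℝ | f p.1 = f p.2} := by
      ext f
      simp only [chainSet, mem_setOf_eq, mem_inter_iff, mem_iInter, mem_preimage]
      constructor
      · rintro ⟨h1, h2⟩; exact ⟨h1, fun p hp => h2 p.1 p.2 hp⟩
      · rintro ⟨h1, h2⟩; exact ⟨h1, fun x y h => h2 (x, y) h⟩
    rw [this]
    refine IsClosed.inter (isClosed_iInter fun t => (isClosed_Icc).preimage (continuous_apply t)) ?_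
    exact isClosed_iInter fun p => isClosed_iInter fun _ => isClosed_eq (continuous_apply p.1) (continuous_apply p.2)
  · intro f hf
    rw [mem_univ_pi]
    exact fun t => hf.1 t

private theorem chainSet_convex {X : Type u} [TopologicalSpace X] (W : Ordinal.{v} → Set X) :
    Convex ℝ (chainSet W) := by
  rintro f hf g hg a b ha hb hab
  constructor
  · intro t
    have := (convex_Icc (0:ℝ) 1) (hf.1 t) (hg.1 t) ha hb hab
    simpa using this
  · intro x y h
    have h1 := hf.2 x y h
    have h2 := hg.2 x y h
    simp [h1, h2]

private theorem chainSet_scatCont {X : Type u} [TopologicalSpace X] {W : Ordinal.{v} → Set X}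
    (hW : ∀ o, IsOpen (W o)) (hmono : Monotone W) {f : X → ℝ} (hf : f ∈ chainSet W) :
    ScatCont f := by
  intro A hA
  by_cases hcase : ∃ o : Ordinal, (A ∩ W o).Nonempty
  · set s : Set Ordinal.{v} := {o | (A ∩ W o).Nonempty} with hs
    have hm : sInf s ∈ s := csInf_mem hcase
    set m := sInf s with hmdef
    obtain ⟨a, haA, haW⟩ := hm
    refine ⟨a, haA, ?_⟩
    have hnhds : W m ∈ 𝓝 a := (hW m).mem_nhds haW
    rw [← continuousWithinAt_inter hnhds]
    have hconst : ∀ t ∈ A ∩ W m, f t = f a := by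
      rintro t ⟨htA, htW⟩
      apply hf.2
      intro o
      rcases le_or_gt m o with h | h
      · simp [hmono h htW, hmono h haW]
      · have hempty : ¬ (A ∩ W o).Nonempty := fun hne => (not_lt.2 (csInf_le (OrderBot.bddBelow s) hne)) h
        constructor
        · intro hto; exact absurd ⟨t, htA, hto⟩ hempty
        · intro hao; exact absurd ⟨a, haA, hao⟩ hempty
    exact ContinuousWithinAt.congr continuousWithinAt_const hconst (hconst a ⟨haA, haW⟩)
  · push_neg at hcase
    obtain ⟨a, haA⟩ := hA
    refine ⟨a, haA, ?_⟩
    have hcase' : ∀ o : Ordinal.{v}, ¬ (A ∩ W o).Nonempty := by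
      intro o h; rw [hcase o] at h; exact absurd h (by simp)
    have hconst : ∀ t ∈ A, f t = f a := by
      intro t htA
      apply hf.2
      intro o
      constructor
      · intro h; exact absurd (⟨t, htA, h⟩ : (A ∩ W o).Nonempty) (hcase' o)
      · intro h; exact absurd (⟨a, haA, h⟩ : (A ∩ W o).Nonempty) (hcase' o)
    exact ContinuousWithinAt.congr continuousWithinAt_const hconst (hconst a haA)

private theorem aux_chain {X : Type u} [TopologicalSpace X] (Z : Set X) (𝒰 : Set (Set ↥Z))
    (hopen : ∀ U ∈ 𝒰, IsOpen U) (hcov : ⋃₀ 𝒰 = Set.univ) (μ : Cardinal.{u})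
    (hno : ∀ 𝒱 ⊆ 𝒰, #𝒱 ≤ μ → ⋃₀ 𝒱 ≠ Set.univ) :
    ∃ (W : Ordinal.{u} → Set X) (x : Ordinal.{u} → X),
      (∀ o, IsOpen (W o)) ∧ Monotone W ∧
      (∀ o < (Order.succ μ).ord, x o ∈ W o) ∧
      (∀ p o, p < o → o < (Order.succ μ).ord → x o ∉ W p) := by
  have hne : Nonempty ↥Z := by
    by_contra h
    exact hno ∅ (empty_subset _) (by simp) (by
      rw [sUnion_empty]
      exact (Set.univ_eq_empty_iff.2 (not_nonempty_iff.1 h)).symm)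
  set θ := (Order.succ μ).ord with hθ
  set F : Ordinal.{u} → ↥Z × Set ↥Z :=
    Ordinal.lt_wf.fix (fun o ih => Classical.epsilon
      (fun zu : ↥Z × Set ↥Z => zu.2 ∈ 𝒰 ∧ zu.1 ∈ zu.2 ∧ ∀ p (h : p < o), zu.1 ∉ (ih p h).2))
     with hF
  have hFeq : ∀ o, F o = Classical.epsilon
      (fun zu : ↥Z × Set ↥Z => zu.2 ∈ 𝒰 ∧ zu.1 ∈ zu.2 ∧ ∀ p (_ : p < o), zu.1 ∉ (F p).2) := by
    intro o
    rw [hF]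
    exact WellFounded.fix_eq _ _ o
  have hP : ∀ o : Ordinal.{u}, o < θ →
      (F o).2 ∈ 𝒰 ∧ (F o).1 ∈ (F o).2 ∧ ∀ p, p < o → (F o).1 ∉ (F p).2 := by
    intro o
    induction o using Ordinal.induction with
    | h o ih =>
      intro hoθ
      have hex : ∃ zu : ↥Z × Set ↥Z, zu.2 ∈ 𝒰 ∧ zu.1 ∈ zu.2 ∧ ∀ p (_ : p < o), zu.1 ∉ (F p).2 := by
        set 𝒱 : Set (Set ↥Z) :=
          Set.range (fun i : o.ToType => (F ((Ordinal.ToType.mk (o := o)).symm i).1).2) with h𝒱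
        have hsub : 𝒱 ⊆ 𝒰 := by
          rintro _ ⟨i, rfl⟩
          have hp := ((Ordinal.ToType.mk (o := o)).symm i).2
          exact (ih _ hp (hp.trans hoθ)).1
        have hcard : #𝒱 ≤ μ := by
          have h1 : #𝒱 ≤ #o.ToType := Cardinal.mk_range_le
          rw [Cardinal.mk_toType] at h1
          have h3 : o.card < Order.succ μ := Cardinal.lt_ord.1 hoθ
          exact h1.trans (Order.lt_succ_iff.1 h3)
        have hneq := hno 𝒱 hsub hcard
        have : ∃ z : ↥Z, z ∉ ⋃₀ 𝒱 := by
          by_contra h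
          push_neg at h
          exact hneq (eq_univ_of_forall h)
        obtain ⟨z, hz⟩ := this
        have hzU : z ∈ ⋃₀ 𝒰 := by rw [hcov]; trivial
        obtain ⟨u, hu𝒰, hzu⟩ := hzU
        refine ⟨(z, u), hu𝒰, hzu, ?_⟩
        intro p hp hmem
        refine hz ⟨(F p).2, ⟨Ordinal.ToType.mk (o := o) ⟨p, hp⟩, ?_⟩, hmem⟩
        simp
      have := Classical.epsilon_spec hex
      rw [← hFeq o] at this
      exact ⟨this.1, this.2.1, fun p hp => this.2.2 p hp⟩
  have hext : ∀ o : Ordinal.{u}, ∃ V : Set X, IsOpen V ∧ (o < θ → (Subtype.val ⁻¹' V : Set ↥Z) = (F o).2) := by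
    intro o
    by_cases h : o < θ
    · obtain ⟨V, hV, hVeq⟩ := isOpen_induced_iff.1 (hopen _ (hP o h).1)
      exact ⟨V, hV, fun _ => hVeq⟩
    · exact ⟨∅, isOpen_empty, fun h' => absurd h' h⟩
  choose V hVopen hVeq using hext
  refine ⟨fun o => ⋃ p ∈ Set.Iic o, V p, fun o => ((F o).1 : X), ?_, ?_, ?_, ?_⟩
  · exact fun o => isOpen_biUnion fun p _ => hVopen p
  · intro o o' hoo'
    exact Set.biUnion_subset_biUnion_left (Set.Iic_subset_Iic.2 hoo')
  · intro o ho
    have : ((F o).1 : X) ∈ V o := by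
      have := (hP o ho).2.1
      rw [← hVeq o ho] at this
      exact this
    exact Set.mem_biUnion (Set.mem_Iic.2 le_rfl) this
  · intro p o hpo hoθ' hmem
    obtain ⟨q, hq, hmemq⟩ := Set.mem_iUnion₂.1 hmem
    have hqo : q < o := lt_of_le_of_lt hq hpo
    have hqθ : q < θ := hqo.trans hoθ'
    have : (F o).1 ∈ (F q).2 := by
      rw [← hVeq q hqθ]
      exact hmemq
    exact (hP o hoθ').2.2 q hqo this

end StmtFourAux

/-- For any topological space `X` of countable tightness,
`hl(X) ≤ sup{ w(K) : K is a compact convex subset of SC_p(X) }`. -/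
theorem stmt4 {X : Type*} [TopologicalSpace X] (ht : CountablyTight X) :
    heredLindelofNum X ≤
      sSup { c : Cardinal | ∃ K : Set (X → ℝ), (∀ f ∈ K, ScatCont f) ∧
        IsCompact K ∧ Convex ℝ K ∧ c = wt K } := by
  classical
  set S : Set Cardinal := { c : Cardinal | ∃ K : Set (X → ℝ), (∀ f ∈ K, ScatCont f) ∧
      IsCompact K ∧ Convex ℝ K ∧ c = wt K } with hSdef
  -- ℵ₀ belongs to S, via the singleton of the zero function
  have hK0 : (Cardinal.aleph0 : Cardinal) ∈ S := by
    refine ⟨{(fun _ => 0 : X → ℝ)}, ?_, isCompact_singleton, convex_singleton _, ?_⟩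
    · rintro f rfl
      intro A hA
      obtain ⟨a, ha⟩ := hA
      exact ⟨a, ha, continuousWithinAt_const⟩
    · -- the weight of a singleton is ℵ₀
      apply le_antisymm
      · apply le_csInf
        · refine ⟨max #({Set.univ} : Set (Set ↥({(fun _ => 0 : X → ℝ)} : Set (X → ℝ)))) Cardinal.aleph0,
            {Set.univ}, ?_, rfl⟩
          apply TopologicalSpace.isTopologicalBasis_of_isOpen_of_nhds
          · rintro u rfl; exact isOpen_univ
          · intro a u hau hu
            refine ⟨Set.univ, rfl, Set.mem_univ a, fun g _ => ?_⟩
            have : g = a := Subsingleton.elim g a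
            rw [this]; exact hau
        · rintro c ⟨B, hB, rfl⟩
          exact le_max_right _ _
      · apply csInf_le (OrderBot.bddBelow _)
        refine ⟨{Set.univ}, ?_, ?_⟩
        · apply TopologicalSpace.isTopologicalBasis_of_isOpen_of_nhds
          · rintro u rfl; exact isOpen_univ
          · intro a u hau hu
            refine ⟨Set.univ, rfl, Set.mem_univ a, fun g _ => ?_⟩
            have : g = a := Subsingleton.elim g a
            rw [this]; exact hau
        · rw [max_eq_right]
          have : #({Set.univ} : Set (Set ↥({(fun _ => 0 : X → ℝ)} : Set (X → ℝ)))) = 1 :=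
            Cardinal.mk_singleton _
          rw [this]
          exact Cardinal.one_le_aleph0
  -- S is bounded above
  have hbdd : BddAbove S := by
    refine ⟨max ((2 : Cardinal) ^ #(X → ℝ)) Cardinal.aleph0, ?_⟩
    rintro c ⟨K, hscat, hcpt, hconv, rfl⟩
    have h1 : wt ↥K ≤ max #({U : Set ↥K | IsOpen U}) Cardinal.aleph0 :=
      csInf_le (OrderBot.bddBelow _) ⟨{U | IsOpen U}, TopologicalSpace.isTopologicalBasis_opens, rfl⟩
    refine h1.trans (max_le_max_right _ ?_)
    calc #({U : Set ↥K | IsOpen U}) ≤ #(Set ↥K) := Cardinal.mk_set_le _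
      _ = (2 : Cardinal) ^ #↥K := Cardinal.mk_set
      _ ≤ (2 : Cardinal) ^ #(X → ℝ) :=
          Cardinal.power_le_power_left (by norm_num) (Cardinal.mk_set_le _)
  set μ := sSup S with hμdef
  have hμ0 : Cardinal.aleph0 ≤ μ := le_csSup hbdd hK0
  by_contra hcon
  -- find a subspace with large Lindelöf number
  have h1 : ∃ Z : Set X, ¬ lindelofNum ↥Z ≤ μ := by
    by_contra h
    push_neg at h
    exact hcon (ciSup_le h)
  obtain ⟨Z, hZ⟩ := h1
  have hμnot : μ ∉ { κ : Cardinal | Cardinal.aleph0 ≤ κ ∧ ∀ 𝒰 : Set (Set ↥Z), (∀ U ∈ 𝒰, IsOpen U) →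
      ⋃₀ 𝒰 = Set.univ → ∃ 𝒱 ⊆ 𝒰, #𝒱 ≤ κ ∧ ⋃₀ 𝒱 = Set.univ } :=
    fun hmem => hZ (csInf_le (OrderBot.bddBelow _) hmem)
  have h𝒰 : ∃ 𝒰 : Set (Set ↥Z), (∀ U ∈ 𝒰, IsOpen U) ∧ ⋃₀ 𝒰 = Set.univ ∧
      ∀ 𝒱 ⊆ 𝒰, #𝒱 ≤ μ → ⋃₀ 𝒱 ≠ Set.univ := by
    by_contra h
    push_neg at h
    refine hμnot ⟨hμ0, fun 𝒰 hopen hcov => ?_⟩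
    obtain ⟨𝒱, h𝒱sub, h𝒱⟩ := h 𝒰 hopen hcov
    exact ⟨𝒱, h𝒱sub, h𝒱⟩
  obtain ⟨𝒰, hopen, hcov, hno⟩ := h𝒰
  obtain ⟨W, x, hWopen, hWmono, hx1, hx2⟩ := aux_chain Z 𝒰 hopen hcov μ hno
  set θ := (Order.succ μ).ord with hθdef
  set K := chainSet W with hKdef
  have hKS : wt ↥K ∈ S :=
    ⟨K, fun f hf => chainSet_scatCont hWopen hWmono hf, chainSet_isCompact W, chainSet_convex W, rfl⟩
  have hle : wt ↥K ≤ μ := le_csSup hbdd hKS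
  -- the indicator functions of equivalence classes
  set E : Ordinal → Set X := fun o => {t | ∀ q, t ∈ W q ↔ x o ∈ W q} with hEdef
  set f : Ordinal → (X → ℝ) := fun o => (E o).indicator (fun _ => (1:ℝ)) with hfdef
  have hfmem : ∀ o, f o ∈ K := by
    intro o
    constructor
    · intro t
      by_cases h : t ∈ E o
      · simp [hfdef, Set.indicator_of_mem h]
      · simp [hfdef, Set.indicator_of_notMem h]
    · intro s t h
      have hiff : s ∈ E o ↔ t ∈ E o := by
        constructor
        · intro hs q; rw [← h q]; exact hs q
        · intro hs q; rw [h q]; exact hs q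
      by_cases hs : s ∈ E o
      · rw [hfdef]
        simp only [Set.indicator_of_mem hs, Set.indicator_of_mem (hiff.1 hs)]
      · rw [hfdef]
        simp only [Set.indicator_of_notMem hs, Set.indicator_of_notMem (fun ht => hs (hiff.2 ht))]
  have hfx : ∀ o, f o (x o) = 1 := by
    intro o
    have : x o ∈ E o := fun q => Iff.rfl
    simp [hfdef, Set.indicator_of_mem this]
  have hfx' : ∀ o o', o < θ → o' < θ → o ≠ o' → f o (x o') = 0 := by
    intro o o' ho ho' hne
    have : x o' ∉ E o := by
      intro hmem
      rcases hne.lt_or_gt with h | h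
      · exact hx2 o o' h ho' ((hmem o).2 (hx1 o ho))
      · exact hx2 o' o h ho ((hmem o').1 (hx1 o' ho'))
    simp [hfdef, Set.indicator_of_notMem this]
  -- lower bound on the weight of K
  have hge : Order.succ μ ≤ wt ↥K := by
    apply le_csInf
    · exact ⟨_, {U | IsOpen U}, TopologicalSpace.isTopologicalBasis_opens, rfl⟩
    rintro c ⟨B, hB, rfl⟩
    have key : Order.succ μ ≤ #B := by
      have hinj : ∃ b : θ.ToType → Set ↥K, (∀ i, b i ∈ B) ∧ Function.Injective b := by
        have hpt : ∀ i : θ.ToType, ∃ b ∈ B,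
            (⟨f ((Ordinal.ToType.mk (o := θ)).symm i).1, hfmem _⟩ : ↥K) ∈ b ∧
            b ⊆ {g : ↥K | (1:ℝ)/2 < (g : X → ℝ) (x ((Ordinal.ToType.mk (o := θ)).symm i).1)} := by
          intro i
          set o := ((Ordinal.ToType.mk (o := θ)).symm i).1 with hodef
          have hoθ : o < θ := ((Ordinal.ToType.mk (o := θ)).symm i).2
          apply hB.exists_subset_of_mem_open
          · show (1:ℝ)/2 < f o (x o)
            rw [hfx o]; norm_num
          · exact isOpen_lt continuous_const ((continuous_apply _).comp continuous_subtype_val)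
        choose b hbB hbmem hbsub using hpt
        refine ⟨b, hbB, ?_⟩
        intro i j hbij
        have h1 : (⟨f ((Ordinal.ToType.mk (o := θ)).symm j).1, hfmem _⟩ : ↥K) ∈ b i := by
          rw [hbij]; exact hbmem j
        have h2 := hbsub i h1
        simp only [Set.mem_setOf_eq] at h2
        have hoeq : ((Ordinal.ToType.mk (o := θ)).symm j).1 = ((Ordinal.ToType.mk (o := θ)).symm i).1 := by
          by_contra hne
          rw [hfx' _ _ ((Ordinal.ToType.mk (o := θ)).symm j).2 ((Ordinal.ToType.mk (o := θ)).symm i).2 hne] at h2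
          norm_num at h2
        have : (Ordinal.ToType.mk (o := θ)).symm j = (Ordinal.ToType.mk (o := θ)).symm i :=
          Subtype.ext hoeq
        exact ((Ordinal.ToType.mk (o := θ)).symm.injective this).symm
      obtain ⟨b, hbB, hbinj⟩ := hinj
      have : #θ.ToType ≤ #B :=
        Cardinal.mk_le_of_injective (f := fun i => (⟨b i, hbB i⟩ : ↥B))
          (fun i j hij => hbinj (congrArg Subtype.val hij))
      rwa [Cardinal.mk_toType, hθdef, Cardinal.card_ord] at this
    exact key.trans (le_max_left _ _)
  exact absurd (hge.trans hle) (not_le.2 (Order.lt_succ μ))
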